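/- Consider misère NimG-RM on a graph G with a loop on every vertex and strictly positive weight function w. If the starting vertex u has weight w(u) ≥ 2, then (G,u,w) is a first-player win. -/

import Mathlib

universe u
mutual
  inductive GNormalWin {α : Type u} (moves : α → α → Prop) : α → Prop
    | step {p q : α} : moves p q → GNormalLose moves q → GNormalWin moves p
  inductive GNormalLose {α : Type u} (moves : α → α → Prop) : α → Prop
    | intro {p : α} : (∀ q, moves p q → GNormalWin moves q) → GNormalLose moves p
end

mutual
  inductive GMisereWin {α : Type u} (moves : α → α → Prop) : α → Prop
    | terminal {p : α} : (∀ q, ¬ moves p q) → GMisereWin moves p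
    | step {p q : α} : moves p q → GMisereLose moves q → GMisereWin moves p
  inductive GMisereLose {α : Type u} (moves : α → α → Prop) : α → Prop
    | intro {p q₀ : α} : moves p q₀ → (∀ q, moves p q → GMisereWin moves q) → GMisereLose moves p
end

def nimMove {V : Type u} (adj : V → V → Prop) (p q : V × (V → ℕ)) : Prop :=
  adj p.1 q.1 ∧ q.2 p.1 < p.2 p.1 ∧ ∀ v, v ≠ p.1 → q.2 v = p.2 v

mutual
  inductive NimRMWin {V : Type u} (adj : V → V → Prop) : V × (V → ℕ) → Prop
    | zero {p} : p.2 p.1 = 0 → NimRMWin adj p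
    | step {p q} : nimMove adj p q → NimRMLose adj q → NimRMWin adj p
  inductive NimRMLose {V : Type u} (adj : V → V → Prop) : V × (V → ℕ) → Prop
    | intro {p} : p.2 p.1 ≠ 0 → (∀ q, nimMove adj p q → NimRMWin adj q) → NimRMLose adj p
end

def vgMove {V : Type u} (A : V → V → Prop) (p q : Set V × V) : Prop :=
  A p.2 q.2 ∧ q.2 ∈ p.1 ∧ q.2 ≠ p.2 ∧ q.1 = p.1 \ {p.2}

def addOut {V : Type u} (A : V → V → Prop) : V ⊕ V → V ⊕ V → Prop
  | .inl a, .inl b => A a b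
  | .inl a, .inr b => a = b
  | _, _ => False

def MaxMatching {V : Type u} (G : SimpleGraph V) (M : G.Subgraph) : Prop :=
  M.IsMatching ∧ ∀ N : G.Subgraph, N.IsMatching → N.edgeSet.ncard ≤ M.edgeSet.ncard


lemma nim_det {V : Type} [Fintype V] (adj : V → V → Prop) :
    ∀ n (p : V × (V → ℕ)), (∑ v, p.2 v) < n → NimRMWin adj p ∨ NimRMLose adj p := by
  intro n
  induction n with
  | zero => exact fun p h => absurd h (Nat.not_lt_zero _)
  | succ n ih =>
    intro p hp
    by_cases h0 : p.2 p.1 = 0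
    · exact Or.inl (.zero h0)
    by_cases hl : ∃ q, nimMove adj p q ∧ NimRMLose adj q
    · obtain ⟨q, hq, hql⟩ := hl
      exact Or.inl (.step hq hql)
    · right
      refine .intro h0 fun q hq => ?_
      have hsum : ∑ v, q.2 v < ∑ v, p.2 v := by
        refine Finset.sum_lt_sum (fun i _ => ?_) ⟨p.1, Finset.mem_univ _, hq.2.1⟩
        by_cases hi : i = p.1
        · subst hi; exact le_of_lt hq.2.1
        · exact le_of_eq (hq.2.2 i hi)
      rcases ih q (lt_of_lt_of_le hsum (Nat.lt_succ_iff.mp hp)) with hw | hl'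
      · exact hw
      · exact absurd ⟨q, hq, hl'⟩ hl

/-- Misère NimG-RM with a loop on every vertex and positive weights: if the starting vertex
has weight at least 2, the first player wins. -/
theorem stmt5 {V : Type} [Fintype V] (G : SimpleGraph V) (w : V → ℕ) (hw : ∀ v, 0 < w v)
    (u : V) (h2 : 2 ≤ w u) :
    NimRMWin (fun a b => G.Adj a b ∨ a = b) (u, w) := by
  classical
  set adj : V → V → Prop := fun a b => G.Adj a b ∨ a = b with hadj
  by_cases hl : ∃ q, nimMove adj (u, w) q ∧ NimRMLose adj q
  · obtain ⟨q, hq, hql⟩ := hl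
    exact .step hq hql
  · -- play the loop, setting w u := 1
    refine .step (q := (u, Function.update w u 1)) ⟨Or.inr rfl, ?_, ?_⟩ ?_
    · simp; omega
    · intro v hv; simp [Function.update_of_ne hv]
    refine .intro (by simp) fun q hq => ?_
    -- q.2 u = 0, and q is also a legal move from (u, w)
    have hq0 : q.2 u = 0 := by
      have := hq.2.1
      simp [Function.update_self] at this
      omega
    have hmove : nimMove adj (u, w) q := by
      refine ⟨hq.1, ?_, ?_⟩
      · simp only [hq0]; omega
      · intro v hv
        have := hq.2.2 v hv
        simpa [Function.update_of_ne hv] using this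
    rcases nim_det adj ((∑ v, q.2 v) + 1) q (Nat.lt_succ_self _) with hw | hl'
    · exact hw
    · exact absurd ⟨q, hmove, hl'⟩ hl
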